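/- Let ℓ²(ℤ) carry the real structure ē_n = e_{−n}, and for α ∈ ℝ let Q_α be the closed densely defined operator Q_α e_n = e^{αn} e_n with domain {(a_n) : Σ (1+e^{2αn})|a_n|² < ∞}. Then Q_α satisfies Q_α* = conj(Q_α)^{-1}, and hence L_α := graph(Q_α) is a Lagrangian in ℓ²(ℤ) ⊕ (−ℓ²(ℤ)). Moreover, for α₁ = −α₂ ≠ 0, the composition L_{α₁} ∘ L_{α₂} is not closed, hence not a Lagrangian. -/

import Mathlib

set_option maxHeartbeats 1000000


noncomputable section

/-- A real structure on a complex inner ℂ product space: an anti-unitary involution `v ↦ v̄`. -/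
structure RealStructure (W : Type*) [NormedAddCommGroup W] [InnerProductSpace ℂ W] where
  conj : W → W
  map_add : ∀ v w : W, conj (v + w) = conj v + conj w
  map_smul : ∀ (c : ℂ) (v : W), conj (c • v) = (starRingEnd ℂ) c • conj v
  invol : ∀ v : W, conj (conj v) = v
  inner_conj : ∀ v w : W, (inner ℂ (conj v) (conj w) : ℂ) = (starRingEnd ℂ) (inner ℂ v w : ℂ)

/-- The real structure of `A ⊕ (−B)`. -/
def pairConj {A B : Type*} [NormedAddCommGroup A] [InnerProductSpace ℂ A]
    [NormedAddCommGroup B] [InnerProductSpace ℂ B]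
    (rA : RealStructure A) (rB : RealStructure B) : A × B → A × B :=
  fun p => (rA.conj p.1, -rB.conj p.2)

/-- The Hermitian inner ℂ product of `A ⊕ B`. -/
def pairInner {A B : Type*} [NormedAddCommGroup A] [InnerProductSpace ℂ A]
    [NormedAddCommGroup B] [InnerProductSpace ℂ B] (x y : A × B) : ℂ :=
  (inner ℂ x.1 y.1 : ℂ) + (inner ℂ x.2 y.2 : ℂ)

/-- A Lagrangian `L ⊆ A ⊕ (−B)`. -/
def IsLagrangianPair {A B : Type*} [NormedAddCommGroup A] [InnerProductSpace ℂ A]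
    [NormedAddCommGroup B] [InnerProductSpace ℂ B]
    (rA : RealStructure A) (rB : RealStructure B) (L : Submodule ℂ (A × B)) : Prop :=
  pairConj rA rB '' (L : Set (A × B)) = {y : A × B | ∀ x ∈ L, pairInner x y = 0}

/-- The composition of two linear relations `L₀₁ ⊆ W₀ × W₁`, `L₁₂ ⊆ W₁ × W₂`. -/
def composeRel {W₀ W₁ W₂ : Type*} [NormedAddCommGroup W₀] [InnerProductSpace ℂ W₀]
    [NormedAddCommGroup W₁] [InnerProductSpace ℂ W₁]
    [NormedAddCommGroup W₂] [InnerProductSpace ℂ W₂]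
    (L01 : Submodule ℂ (W₀ × W₁)) (L12 : Submodule ℂ (W₁ × W₂)) :
    Submodule ℂ (W₀ × W₂) where
  carrier := {p | ∃ w₁ : W₁, (p.1, w₁) ∈ L01 ∧ (w₁, p.2) ∈ L12}
  add_mem' := by
    rintro a b ⟨w, hw1, hw2⟩ ⟨w', hw1', hw2'⟩
    exact ⟨w + w', L01.add_mem hw1 hw1', L12.add_mem hw2 hw2'⟩
  zero_mem' := ⟨0, L01.zero_mem, L12.zero_mem⟩
  smul_mem' := by
    rintro c a ⟨w, hw1, hw2⟩
    exact ⟨c • w, L01.smul_mem c hw1, L12.smul_mem c hw2⟩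

variable {H : Type*} [NormedAddCommGroup H] [InnerProductSpace ℂ H] [CompleteSpace H]

/-- The graph of the (unbounded, densely defined, closed) operator `Q_α e_n = e^{αn} e_n`
on `ℓ²(ℤ)`, described by an orthonormal Hilbert basis `(e_n)_{n ∈ ℤ}`:
`(a, b) ∈ graph(Q_α)` iff `b` has coefficients `⟨e_n, b⟩ = e^{αn} ⟨e_n, a⟩`. -/
def graphQ (e : HilbertBasis ℤ ℂ H) (α : ℝ) : Submodule ℂ (H × H) where
  carrier := {p | ∀ n : ℤ, (inner ℂ (e n) p.2 : ℂ) = (Real.exp (α * n) : ℝ) * inner ℂ (e n) p.1}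
  add_mem' := by
    intro a b ha hb n
    simp only [Prod.fst_add, Prod.snd_add, inner_add_right, ha n, hb n]
    ring
  zero_mem' := by
    intro n
    simp
  smul_mem' := by
    intro c a ha n
    simp only [Prod.smul_fst, Prod.smul_snd, inner_smul_right, ha n]
    ring

lemma basic_mem (e : HilbertBasis ℤ ℂ H) (α : ℝ) (m : ℤ) :
    ((e m, ((Real.exp (α * m) : ℝ) : ℂ) • e m)) ∈ graphQ e α := by
  intro n
  have horth := e.orthonormal
  rw [orthonormal_iff_ite] at horth
  simp only [inner_smul_right, horth n m]
  by_cases h : n = m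
  · subst h; simp
  · simp [h]

lemma adjoint_iff (e : HilbertBasis ℤ ℂ H) (α : ℝ) (a b : H) :
    (∀ p ∈ graphQ e α, (inner ℂ a p.2 : ℂ) = inner ℂ b p.1) ↔ (b, a) ∈ graphQ e (-α) := by
  constructor
  · intro h n
    have := h _ (basic_mem e α n)
    simp only [inner_smul_right] at this
    -- this : exp(αn) * ⟪a, e n⟫ = ⟪b, e n⟫
    have hc := congrArg (starRingEnd ℂ) this
    simp only [map_mul, inner_conj_symm, Complex.conj_ofReal] at hc
    -- hc : exp(αn) * ⟪e n, a⟫ = ⟪e n, b⟫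
    rw [← hc]
    rw [← mul_assoc, ← Complex.ofReal_mul, neg_mul, ← Real.exp_add, neg_add_cancel,
      Real.exp_zero, Complex.ofReal_one, one_mul]
  · intro h p hp
    have h1 := e.hasSum_inner_mul_inner a p.2
    have h2 := e.hasSum_inner_mul_inner b p.1
    refine h1.unique ?_
    convert h2 using 1
    funext n
    have ha : (inner ℂ a (e n) : ℂ) = (Real.exp (-α * n) : ℝ) * inner ℂ b (e n) := by
      have := congrArg (starRingEnd ℂ) (h n)
      simpa only [map_mul, inner_conj_symm, Complex.conj_ofReal] using this
    rw [hp n, ha]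
    have hx : ((Real.exp (-α * n) : ℝ) : ℂ) * ((Real.exp (α * n) : ℝ) : ℂ) = 1 := by
      rw [← Complex.ofReal_mul, ← Real.exp_add, neg_mul, neg_add_cancel, Real.exp_zero,
        Complex.ofReal_one]
    linear_combination (inner ℂ b (e n) : ℂ) * (inner ℂ (e n) p.1 : ℂ) * hx

omit [CompleteSpace H] in
lemma conj_coeff (e : HilbertBasis ℤ ℂ H) (r : RealStructure H)
    (hr : ∀ n : ℤ, r.conj (e n) = e (-n)) (n : ℤ) (v : H) :
    (inner ℂ (e n) (r.conj v) : ℂ) = (starRingEnd ℂ) (inner ℂ (e (-n)) v) := by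
  have h : e n = r.conj (e (-n)) := by rw [hr (-n), neg_neg]
  rw [h, r.inner_conj]

omit [CompleteSpace H] in
lemma conj_neg (r : RealStructure H) (v : H) : r.conj (-v) = - r.conj v := by
  have := r.map_smul (-1) v
  simpa using this

lemma exp_cast (α : ℝ) (n : ℤ) : Real.exp (α * ((-n : ℤ) : ℝ)) = Real.exp (-α * (n : ℝ)) := by
  push_cast; ring_nf

lemma exps_one (x : ℝ) : ((Real.exp (-x) : ℝ) : ℂ) * ((Real.exp x : ℝ) : ℂ) = 1 := by
  rw [← Complex.ofReal_mul, ← Real.exp_add, neg_add_cancel, Real.exp_zero, Complex.ofReal_one]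

lemma mem_image_iff (e : HilbertBasis ℤ ℂ H) (r : RealStructure H)
    (hr : ∀ n : ℤ, r.conj (e n) = e (-n)) (α : ℝ) (y : H × H) :
    y ∈ pairConj r r '' (graphQ e α : Set (H × H)) ↔
    ∀ n : ℤ, (inner ℂ (e n) y.2 : ℂ) = -((Real.exp (-α * n) : ℝ) * inner ℂ (e n) y.1) := by
  constructor
  · rintro ⟨⟨a, b⟩, hab, rfl⟩ n
    show (inner ℂ (e n) (-(r.conj b)) : ℂ) = -((Real.exp (-α * n) : ℝ) * inner ℂ (e n) (r.conj a))
    rw [inner_neg_right, conj_coeff e r hr, conj_coeff e r hr, hab (-n)]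
    rw [map_mul, Complex.conj_ofReal, exp_cast]
  · intro h
    refine ⟨(r.conj y.1, -(r.conj y.2)), ?_, ?_⟩
    · intro n
      show (inner ℂ (e n) (-(r.conj y.2)) : ℂ) = (Real.exp (α * n) : ℝ) * inner ℂ (e n) (r.conj y.1)
      rw [inner_neg_right, conj_coeff e r hr, conj_coeff e r hr, h (-n)]
      rw [map_neg, map_mul, Complex.conj_ofReal, neg_neg]
      congr 2
      push_cast; ring_nf
    · show (r.conj (r.conj y.1), -(r.conj (-(r.conj y.2)))) = y
      rw [r.invol, conj_neg, r.invol, neg_neg]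
  
lemma mem_perp_iff (e : HilbertBasis ℤ ℂ H) (α : ℝ) (y : H × H) :
    (∀ x ∈ graphQ e α, pairInner x y = 0) ↔
    ∀ n : ℤ, (inner ℂ (e n) y.2 : ℂ) = -((Real.exp (-α * n) : ℝ) * inner ℂ (e n) y.1) := by
  constructor
  · intro h n
    have h0 := h _ (basic_mem e α n)
    simp only [pairInner, inner_smul_left, Complex.conj_ofReal] at h0
    -- h0 : ⟪e n, y.1⟫ + exp(αn) * ⟪e n, y.2⟫ = 0
    have hx := exps_one (α * n)
    rw [neg_mul]
    linear_combination ((Real.exp (-(α * n)) : ℝ) : ℂ) * h0 - (inner ℂ (e n) y.2 : ℂ) * hx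
  · intro h x hx
    have h1 := e.hasSum_inner_mul_inner x.1 y.1
    have h2 := e.hasSum_inner_mul_inner x.2 y.2
    have hsum := h1.add h2
    have hzero : (fun n : ℤ => (inner ℂ x.1 (e n) : ℂ) * inner ℂ (e n) y.1
        + (inner ℂ x.2 (e n) : ℂ) * inner ℂ (e n) y.2) = fun _ => 0 := by
      funext n
      have hb : (inner ℂ x.2 (e n) : ℂ) = (Real.exp (α * n) : ℝ) * inner ℂ x.1 (e n) := by
        have := congrArg (starRingEnd ℂ) (hx n)
        simpa only [map_mul, inner_conj_symm, Complex.conj_ofReal] using this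
      rw [hb, h n]
      have hxo := exps_one (α * n)
      have : (-α * (n:ℝ)) = -(α * n) := by ring
      rw [this]
      linear_combination (-((inner ℂ x.1 (e n) : ℂ) * (inner ℂ (e n) y.1 : ℂ))) * hxo
    rw [hzero] at hsum
    show (inner ℂ x.1 y.1 : ℂ) + inner ℂ x.2 y.2 = 0
    exact hsum.unique hasSum_zero

lemma lagrangian (e : HilbertBasis ℤ ℂ H) (r : RealStructure H)
    (hr : ∀ n : ℤ, r.conj (e n) = e (-n)) (α : ℝ) :
    IsLagrangianPair r r (graphQ e α) := by
  ext y
  constructor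
  · intro hy
    exact (mem_perp_iff e α y).mpr ((mem_image_iff e r hr α y).mp hy)
  · intro hy
    exact (mem_image_iff e r hr α y).mpr ((mem_perp_iff e α y).mp hy)

omit [CompleteSpace H] in
lemma conj_norm (r : RealStructure H) (v : H) : ‖r.conj v‖ = ‖v‖ := by
  rw [@norm_eq_sqrt_re_inner ℂ, @norm_eq_sqrt_re_inner ℂ, r.inner_conj]
  congr 1

omit [CompleteSpace H] in
lemma conj_continuous (r : RealStructure H) : Continuous r.conj := by
  have : Isometry r.conj := by
    refine AddMonoidHomClass.isometry_of_norm (AddMonoidHom.mk' r.conj r.map_add) ?_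
    exact fun v => conj_norm r v
  exact this.continuous

lemma rpow_two' (x : ℝ) : x ^ (2 : ℝ) = x ^ (2 : ℕ) := by
  rw [show (2:ℝ) = ((2:ℕ):ℝ) by norm_num, Real.rpow_natCast]

lemma not_closed_comp (e : HilbertBasis ℤ ℂ H) (α : ℝ) (hα : α ≠ 0) :
    ¬ IsClosed ((composeRel (graphQ e α) (graphQ e (-α)) : Set (H × H))) := by
  set C := composeRel (graphQ e α) (graphQ e (-α)) with hC
  set ε := |α| with hεdef
  have hε : 0 < ε := abs_pos.mpr hα
  set σ : ℤ := if 0 < α then 1 else -1 with hσdef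
  set ι : ℕ → ℤ := fun k => σ * (k + 1) with hιdef
  have hαι : ∀ k : ℕ, α * ((ι k : ℤ) : ℝ) = ε * (k + 1) := by
    intro k
    by_cases h : 0 < α
    · simp only [hιdef, hσdef, if_pos h, one_mul, hεdef, abs_of_pos h]
      push_cast; ring
    · have hneg : α < 0 := lt_of_le_of_ne (not_lt.mp h) hα
      simp only [hιdef, hσdef, if_neg h, hεdef, abs_of_neg hneg]
      push_cast; ring
  have hσ0 : σ ≠ 0 := by by_cases h : 0 < α <;> simp [hσdef, h]
  have hι : Function.Injective ι := by
    intro a b hab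
    simp only [hιdef] at hab
    have := mul_left_cancel₀ hσ0 hab
    exact_mod_cast add_right_cancel this
  set g : ℕ → ℂ := fun k => ((Real.exp (-(ε * (k + 1))) / Real.sqrt (k + 1) : ℝ) : ℂ) with hgdef
  set f : ℤ → ℂ := Function.extend ι g 0 with hfdef
  have hfι : ∀ k, f (ι k) = g k := by
    intro k
    rw [hfdef]
    exact hι.extend_apply g _ k
  have hf0 : ∀ n ∉ Set.range ι, f n = 0 := by
    intro n hn
    rw [hfdef, Function.extend_apply' g _ n (by simpa [Set.mem_range] using hn)]
    rfl
  have hgnorm : ∀ k : ℕ, ‖g k‖ = Real.exp (-(ε * (k + 1))) / Real.sqrt (k + 1) := by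
    intro k
    rw [hgdef, Complex.norm_real]
    exact abs_of_nonneg (div_nonneg (Real.exp_nonneg _) (Real.sqrt_nonneg _))
  -- summability of ‖f‖²
  have hsumf : Summable fun n : ℤ => ‖f n‖ ^ (2 : ℝ) := by
    rw [← hι.summable_iff (f := fun n => ‖f n‖ ^ (2 : ℝ))
      (fun n hn => by
        show ‖f n‖ ^ (2:ℝ) = 0
        rw [hf0 n hn, norm_zero, Real.zero_rpow (by norm_num)])]
    refine Summable.of_nonneg_of_le (g := ((fun n : ℤ => ‖f n‖ ^ (2 : ℝ)) ∘ ι))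
      (f := fun k => Real.exp (-(2 * ε)) ^ k) (fun k => by simp only [Function.comp_apply]; positivity) ?_ ?_
    · intro k
      simp only [Function.comp_apply]
      have h1 : ‖f (ι k)‖ ≤ Real.exp (-ε) ^ k := by
        rw [hfι, hgnorm]
        have hs : (1 : ℝ) ≤ Real.sqrt (k + 1) := by
          have h0 : (0:ℝ) ≤ (k:ℝ) + 1 := by positivity
          have h1 := Real.sq_sqrt h0
          have h2 := Real.sqrt_nonneg ((k:ℝ) + 1)
          nlinarith [Nat.cast_nonneg (α := ℝ) k]
        calc Real.exp (-(ε * (k + 1))) / Real.sqrt (k + 1) ≤ Real.exp (-(ε * (k + 1))) :=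
              div_le_self (Real.exp_nonneg _) hs
          _ ≤ Real.exp (-(ε * k)) := by
              apply Real.exp_le_exp.mpr; nlinarith
          _ = Real.exp (-ε) ^ k := by
              rw [← Real.exp_nat_mul]; ring_nf
      show ‖f (ι k)‖ ^ (2:ℝ) ≤ Real.exp (-(2 * ε)) ^ k
      calc ‖f (ι k)‖ ^ (2:ℝ) = ‖f (ι k)‖ ^ (2:ℕ) := rpow_two' _
        _ ≤ (Real.exp (-ε) ^ k) ^ (2:ℕ) := pow_le_pow_left₀ (norm_nonneg _) h1 2
        _ = Real.exp (-(2 * ε)) ^ k := by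
            rw [← pow_mul, mul_comm k 2, pow_mul, ← Real.exp_nat_mul]
            norm_num
    · exact summable_geometric_of_lt_one (Real.exp_nonneg _)
        (Real.exp_lt_one_iff.mpr (by linarith))
  have hmemf : Memℓp f 2 := memℓp_gen (by
    have h2 : ENNReal.toReal 2 = (2 : ℝ) := by norm_num
    rw [h2]
    exact hsumf)
  set a : H := e.repr.symm ⟨f, hmemf⟩ with hadef
  have ha : ∀ n : ℤ, (inner ℂ (e n) a : ℂ) = f n := by
    intro n
    rw [← e.repr_apply_apply, hadef, LinearIsometryEquiv.apply_symm_apply]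
  -- (a, a) is not in C
  have hmem : (a, a) ∉ (C : Set (H × H)) := by
    rintro ⟨w, hw1, -⟩
    have hsumw : Summable fun n : ℤ => ‖e.repr w n‖ ^ (2 : ℝ) := by
      have h2 : ENNReal.toReal 2 = (2 : ℝ) := by norm_num
      have := (e.repr w).prop.summable (p := 2) (by rw [h2]; norm_num)
      rw [h2] at this
      exact this
    have hsc := hsumw.comp_injective hι
    have heq : ((fun n : ℤ => ‖e.repr w n‖ ^ (2 : ℝ)) ∘ ι) = fun k : ℕ => 1 / ((k:ℝ) + 1) := by
      funext k
      have h1 : e.repr w (ι k) =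
          ((Real.exp (ε * (k+1)) * (Real.exp (-(ε * (k + 1))) / Real.sqrt (k + 1)) : ℝ) : ℂ) := by
        rw [e.repr_apply_apply, hw1 (ι k), ha, hfι, hαι, hgdef]
        push_cast
        ring
      have h2 : Real.exp (ε * (k+1)) * (Real.exp (-(ε * (k + 1))) / Real.sqrt (k + 1))
          = 1 / Real.sqrt (k + 1) := by
        rw [mul_div_assoc', ← Real.exp_add]
        norm_num
      have h3 : (0:ℝ) < Real.sqrt (k + 1) := Real.sqrt_pos.mpr (by positivity)
      simp only [Function.comp_apply]
      rw [h1, h2, Complex.norm_real, Real.norm_eq_abs,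
        abs_of_nonneg (by positivity), rpow_two', div_pow, one_pow,
        Real.sq_sqrt (by positivity)]
    rw [heq] at hsc
    rw [show (fun k : ℕ => 1 / ((k:ℝ)+1)) = fun k : ℕ => 1 / ((k+1 : ℕ) : ℝ) by
      push_cast; rfl] at hsc
    exact Real.not_summable_one_div_natCast ((summable_nat_add_iff 1).mp hsc)
  -- (a, a) is in the closure of C
  have hspan : ∀ x ∈ Submodule.span ℂ (Set.range e), (x, x) ∈ C := by
    intro x hx
    induction hx using Submodule.span_induction with
    | mem x hx =>
      obtain ⟨m, rfl⟩ := hx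
      refine ⟨((Real.exp (α * m) : ℝ) : ℂ) • e m, basic_mem e α m, ?_⟩
      intro n
      have horth := e.orthonormal
      rw [orthonormal_iff_ite] at horth
      simp only [inner_smul_right, horth n m]
      by_cases h : n = m
      · subst h
        simp only [if_pos rfl, mul_one]
        rw [← mul_assoc, ← Complex.ofReal_mul, ← Real.exp_add]
        norm_num
      · simp [h]
    | zero => exact C.zero_mem
    | add x y hx hy ihx ihy => exact C.add_mem ihx ihy
    | smul c x hx ihx => exact C.smul_mem c ihx
  have hdense : Dense (Submodule.span ℂ (Set.range e) : Set H) :=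
    Submodule.dense_iff_topologicalClosure_eq_top.mpr e.dense_span
  have hcl : (a, a) ∈ closure (C : Set (H × H)) := by
    have hc : Continuous (fun x : H => (x, x)) := continuous_id.prodMk continuous_id
    have h1 : (a, a) ∈ (fun x : H => (x, x)) '' closure (Submodule.span ℂ (Set.range e) : Set H) :=
      ⟨a, by rw [hdense.closure_eq]; trivial, rfl⟩
    have h2 := image_closure_subset_closure_image hc h1
    refine closure_mono ?_ h2
    rintro p ⟨x, hx, rfl⟩
    exact hspan x hx
  intro hclosed
  exact hmem (hclosed.closure_subset hcl)

lemma perp_closed (C : Submodule ℂ (H × H)) :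
    IsClosed {y : H × H | ∀ x ∈ C, pairInner x y = 0} := by
  have h : {y : H × H | ∀ x ∈ C, pairInner x y = 0}
      = ⋂ x ∈ C, {y : H × H | pairInner x y = 0} := by
    ext y; simp
  rw [h]
  refine isClosed_biInter fun x _ => ?_
  have hc : Continuous fun y : H × H => pairInner x y :=
    (continuous_const.inner continuous_fst).add (continuous_const.inner continuous_snd)
  exact isClosed_singleton.preimage hc

omit [CompleteSpace H] in
lemma pairConj_invol (r : RealStructure H) (p : H × H) :
    pairConj r r (pairConj r r p) = p := by
  show (r.conj (r.conj p.1), -(r.conj (-(r.conj p.2)))) = p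
  rw [r.invol, conj_neg, r.invol, neg_neg]

omit [CompleteSpace H] in
lemma pairConj_continuous (r : RealStructure H) : Continuous (pairConj r r) :=
  ((conj_continuous r).comp continuous_fst).prodMk
    (((conj_continuous r).comp continuous_snd).neg)

lemma not_lagrangian_of_not_closed (r : RealStructure H) (C : Submodule ℂ (H × H))
    (hnc : ¬ IsClosed (C : Set (H × H))) : ¬ IsLagrangianPair r r C := by
  intro hL
  apply hnc
  have hinv : Function.Involutive (pairConj r r) := pairConj_invol r
  have h1 : (C : Set (H × H)) = pairConj r r '' (pairConj r r '' (C : Set (H × H))) := by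
    rw [Set.image_image]
    simp only [pairConj_invol r, Set.image_id']
  rw [h1, hL, Set.image_eq_preimage_of_inverse hinv hinv]
  exact (perp_closed C).preimage (pairConj_continuous r)

/-- On `ℓ²(ℤ)` with the real structure `ē_n = e_{−n}`, the operator `Q_α` satisfies
`Q_α* = conj(Q_α)⁻¹` (stated via graphs: the graph of the adjoint of `Q_α` is the inverse
of the graph of `conj(Q_α)`, which is the graph of `Q_{−α}`), hence its graph `L_α` is a
Lagrangian in `ℓ²(ℤ) ⊕ (−ℓ²(ℤ))`; but for `α ≠ 0` the composition `L_α ∘ L_{−α}` is not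
closed, hence not a Lagrangian. -/
theorem graphQ_lagrangian_composition_not_closed
    (e : HilbertBasis ℤ ℂ H) (r : RealStructure H)
    (hr : ∀ n : ℤ, r.conj (e n) = e (-n)) (α : ℝ) :
    -- Q_α* = conj(Q_α)⁻¹:  (a,b) ∈ graph(Q_α*) ↔ (b,a) ∈ graph(conj Q_α) = graph(Q_{−α})
    (∀ a b : H,
      (∀ p ∈ graphQ e α, (inner ℂ a p.2 : ℂ) = inner ℂ b p.1) ↔ (b, a) ∈ graphQ e (-α)) ∧
    -- hence L_α = graph(Q_α) is a Lagrangian: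
    IsLagrangianPair r r (graphQ e α) ∧
    -- but for α ≠ 0 the composition L_α ∘ L_{−α} is not closed, hence not a Lagrangian:
    (α ≠ 0 →
      ¬ IsClosed ((composeRel (graphQ e α) (graphQ e (-α)) : Set (H × H))) ∧
      ¬ IsLagrangianPair r r (composeRel (graphQ e α) (graphQ e (-α)))) := by
  refine ⟨fun a b => adjoint_iff e α a b, lagrangian e r hr α, fun hα => ?_⟩
  have hnc := not_closed_comp e α hα
  exact ⟨hnc, not_lagrangian_of_not_closed r _ hnc⟩
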